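/- Let G be a symmetric positive semidefinite real 3×3 matrix, |y|_D := √(y · (G y)), and D = {y ∈ ℝ³ : y · (G y) ≤ 1}. Define V_D^cv : ℝ³ → ℝ by V_D^cv(y) = −|y|_D² for y ∈ D and V_D^cv(y) = −2|y|_D + 1 for y ∉ D. Then V_D^cv is continuous and concave on ℝ³. -/

import Mathlib

open scoped Matrix

private lemma phi_le_aux (c t : ℝ) (hc0 : 0 ≤ c) (hc1 : c ≤ 1) (ht : 0 ≤ t) :
    (if t ≤ 1 then -t ^ 2 else -2 * t + 1) ≤ c ^ 2 - 2 * c * t := by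
  split
  · nlinarith [sq_nonneg (c - t)]
  · nlinarith [mul_nonneg (by linarith : (0:ℝ) ≤ 1 - c) (by linarith : (0:ℝ) ≤ 2 * t - 1 - c)]

set_option maxHeartbeats 1000000 in
open Classical in
/-- The concave part `V_D^cv` of the confinement potential, given by `−|y|_D²` on `D` and
`−2|y|_D + 1` outside of `D`, is continuous and concave on `ℝ³`. -/
theorem concave_part_continuous_concave
    (G : Matrix (Fin 3) (Fin 3) ℝ) (hG : G.PosSemidef)
    (Vcv : (Fin 3 → ℝ) → ℝ)
    (hVcv : ∀ y, Vcv y =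
      if y ⬝ᵥ G.mulVec y ≤ 1 then -(Real.sqrt (y ⬝ᵥ G.mulVec y)) ^ 2
      else -2 * Real.sqrt (y ⬝ᵥ G.mulVec y) + 1) :
    Continuous Vcv ∧ ConcaveOn ℝ Set.univ Vcv := by
  classical
  open MatrixOrder in
  set S := CFC.sqrt G with hSdef
  have hSH : S.IsHermitian := (open MatrixOrder in Matrix.nonneg_iff_posSemidef.mp (CFC.sqrt_nonneg G)).isHermitian
  have hST : Sᵀ = S := by
    rw [← Matrix.conjTranspose_eq_transpose_of_trivial]; exact hSH
  have hSS : S * S = G := (open MatrixOrder in CFC.sqrt_mul_sqrt_self G hG.nonneg)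
  -- the linear map y ↦ S y into Euclidean space
  set T : (Fin 3 → ℝ) →ₗ[ℝ] EuclideanSpace ℝ (Fin 3) :=
    (WithLp.linearEquiv 2 ℝ (Fin 3 → ℝ)).symm.toLinearMap ∘ₗ S.mulVecLin
    with hTdef
  have hTapp : ∀ y, T y = fun i => S.mulVec y i := fun y => rfl
  set n : (Fin 3 → ℝ) → ℝ := fun y => ‖T y‖ with hndef
  have hn_nonneg : ∀ y, 0 ≤ n y := fun y => norm_nonneg _
  have hvm : ∀ y : Fin 3 → ℝ, S.mulVec y = Matrix.vecMul y S := by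
    intro y
    conv_rhs => rw [← hST]
    rw [Matrix.vecMul_transpose]
  have key : ∀ y, y ⬝ᵥ G.mulVec y = (S.mulVec y) ⬝ᵥ (S.mulVec y) := by
    intro y
    rw [← hSS, ← Matrix.mulVec_mulVec, Matrix.dotProduct_mulVec, ← hvm]
  have hq_eq : ∀ y, y ⬝ᵥ G.mulVec y = n y ^ 2 := by
    intro y
    rw [key]
    show _ = ‖T y‖ ^ 2
    rw [EuclideanSpace.norm_eq, Real.sq_sqrt (by positivity)]
    simp only [hTapp, Real.norm_eq_abs, dotProduct]
    exact Finset.sum_congr rfl fun i _ => by rw [sq_abs, sq]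
  have hsqrt : ∀ y, Real.sqrt (y ⬝ᵥ G.mulVec y) = n y := by
    intro y
    rw [hq_eq, Real.sqrt_sq (hn_nonneg y)]
  have hcond : ∀ y, (y ⬝ᵥ G.mulVec y ≤ 1) ↔ n y ≤ 1 := by
    intro y
    rw [hq_eq]
    constructor
    · intro h; nlinarith [hn_nonneg y]
    · intro h; nlinarith [hn_nonneg y]
  have hV : ∀ y, Vcv y = if n y ≤ 1 then -(n y) ^ 2 else -2 * n y + 1 := by
    intro y
    rw [hVcv y, hsqrt]
    by_cases h : n y ≤ 1
    · rw [if_pos ((hcond y).mpr h), if_pos h]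
    · rw [if_neg (fun hh => h ((hcond y).mp hh)), if_neg h]
  have hVfun : Vcv = fun y => if n y ≤ 1 then -(n y) ^ 2 else -2 * n y + 1 := funext hV
  have hn_cont : Continuous n :=
    continuous_norm.comp T.continuous_of_finiteDimensional
  constructor
  · rw [hVfun]
    apply Continuous.if_le
    · exact (hn_cont.pow 2).neg
    · exact (continuous_const.mul hn_cont).add continuous_const
    · exact hn_cont
    · exact continuous_const
    · intro y h; rw [h]; ring
  · refine ⟨convex_univ, fun x _ z _ a b ha hb hab => ?_⟩
    set y := a • x + b • z with hy
    have htri : n y ≤ a * n x + b * n z := by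
      have : T y = a • T x + b • T z := by rw [hy]; simp [map_add, map_smul]
      calc n y = ‖a • T x + b • T z‖ := by show ‖T y‖ = _; rw [this]
        _ ≤ ‖a • T x‖ + ‖b • T z‖ := norm_add_le _ _
        _ = a * n x + b * n z := by
            rw [norm_smul, norm_smul, Real.norm_eq_abs, Real.norm_eq_abs,
              abs_of_nonneg ha, abs_of_nonneg hb]
    set c : ℝ := min (n y) 1 with hc
    have hc0 : 0 ≤ c := le_min (hn_nonneg y) zero_le_one
    have hc1 : c ≤ 1 := min_le_right _ _
    have hVy : Vcv y = c ^ 2 - 2 * c * n y := by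
      rw [hV y]
      by_cases h : n y ≤ 1
      · rw [if_pos h, hc, min_eq_left h]; ring
      · rw [if_neg h, hc, min_eq_right (le_of_not_ge h)]; ring
    have hx' : Vcv x ≤ c ^ 2 - 2 * c * n x := by
      rw [hV x]; exact phi_le_aux c (n x) hc0 hc1 (hn_nonneg x)
    have hz' : Vcv z ≤ c ^ 2 - 2 * c * n z := by
      rw [hV z]; exact phi_le_aux c (n z) hc0 hc1 (hn_nonneg z)
    have h1 : a • Vcv x + b • Vcv z ≤ a * (c ^ 2 - 2 * c * n x) + b * (c ^ 2 - 2 * c * n z) := by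
      simp only [smul_eq_mul]
      gcongr
    have h2 : a * (c ^ 2 - 2 * c * n x) + b * (c ^ 2 - 2 * c * n z)
        = c ^ 2 - 2 * c * (a * n x + b * n z) := by
      have : a + b = 1 := hab
      nlinarith [this]
    have h3 : c ^ 2 - 2 * c * (a * n x + b * n z) ≤ c ^ 2 - 2 * c * n y := by
      nlinarith [htri, hc0]
    calc a • Vcv x + b • Vcv z ≤ c ^ 2 - 2 * c * n y := by rw [← h2] at h3; linarith [h1, h3]
      _ = Vcv y := hVy.symm
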